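/- With Δ_k = { x ∈ Γ_k : ∃ i,j ∈ S∖{0}, x + i + M^{-k} j ∈ Γ_k }, one has Δ_k ⊆ N_{3ε_k}(∂Λ), where ε_k = diam(M^{-k}Λ) and N_δ denotes δ-neighborhood. -/

import Mathlib

open Metric Set MeasureTheory
open scoped Pointwise

noncomputable section

/-- All complex eigenvalues of the real matrix `M` have modulus greater than `1`. -/
def IsExpandingMatrix {n : ℕ} (M : Matrix (Fin n) (Fin n) ℝ) : Prop :=
  ∀ z ∈ (M.charpoly.map (algebraMap ℝ ℂ)).roots, 1 < ‖z‖

/-- The real vector associated to an integer vector. -/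
def vecReal {n : ℕ} (v : Fin n → ℤ) : Fin n → ℝ := fun i => (v i : ℝ)

/-- `(M,R)` is a standard pair. -/
def IsStandardPair {n : ℕ} (M : Matrix (Fin n) (Fin n) ℤ) (R : Finset (Fin n → ℤ)) : Prop :=
  IsExpandingMatrix (M.map (Int.cast : ℤ → ℝ)) ∧ (0 : Fin n → ℤ) ∈ R ∧
    ∀ v : Fin n → ℤ, ∃! r, r ∈ R ∧ ∃ z : Fin n → ℤ, v = M.mulVec z + r

/-- The iterated function system map `τ(A) = ⋃_{r ∈ R} M⁻¹ (A + r)`. -/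
def tauIFS {n : ℕ} (M : Matrix (Fin n) (Fin n) ℝ) (R : Set (Fin n → ℝ))
    (A : Set (Fin n → ℝ)) : Set (Fin n → ℝ) :=
  ⋃ r ∈ R, (fun a => M⁻¹.mulVec (a + r)) '' A

/-- The difference multiset `D = R - R` (with multiplicity). -/
def diffMultiset {n : ℕ} (R : Finset (Fin n → ℤ)) : Multiset (Fin n → ℤ) :=
  (R ×ˢ R).val.map fun p => p.1 - p.2

/-- The entry `T_{ij} = card{(Mj + D) ∩ {i}}` of the transition matrix, counted
with multiplicity. -/
def Tentry {n : ℕ} (M : Matrix (Fin n) (Fin n) ℤ) (R : Finset (Fin n → ℤ))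
    (i j : Fin n → ℤ) : ℕ :=
  Multiset.count i ((diffMultiset R).map fun d => M.mulVec j + d)

/-- The set `S = (Λ - Λ) ∩ ℤⁿ` of integer differences of `Λ`. -/
def Sset {n : ℕ} (Λ : Set (Fin n → ℝ)) : Set (Fin n → ℤ) :=
  {v | vecReal v ∈ Λ - Λ}


/-- The `k`-th generation approximation `Γ_k = Σ_{i=1}^k M^{-i} R`. -/
def GammaSet {n : ℕ} (M : Matrix (Fin n) (Fin n) ℝ) (R : Set (Fin n → ℝ)) (k : ℕ) :
    Set (Fin n → ℝ) :=
  {x | ∃ f : Fin k → (Fin n → ℝ), (∀ i, f i ∈ R) ∧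
    x = ∑ i : Fin k, (M⁻¹ ^ ((i : ℕ) + 1)).mulVec (f i)}

/-- The `k`-th generation approximation `Δ_k` to the boundary of `Λ`. -/
def DeltaSet {n : ℕ} (M : Matrix (Fin n) (Fin n) ℝ) (R : Set (Fin n → ℝ))
    (Λ : Set (Fin n → ℝ)) (k : ℕ) : Set (Fin n → ℝ) :=
  {x ∈ GammaSet M R k | ∃ i ∈ Sset Λ, i ≠ 0 ∧ ∃ j ∈ Sset Λ, j ≠ 0 ∧
    x + vecReal i + (M⁻¹ ^ k).mulVec (vecReal j) ∈ GammaSet M R k}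

/-- `Λ` is a tile by the lattice `ℤⁿ`. -/
def IsTileByZn {n : ℕ} (Λ : Set (Fin n → ℝ)) : Prop :=
  IsCompact Λ ∧ 0 < MeasureTheory.volume Λ ∧
    (⋃ z : Fin n → ℤ, (fun x => x + vecReal z) '' Λ) = Set.univ ∧
    ∀ z : Fin n → ℤ, z ≠ 0 → MeasureTheory.volume (Λ ∩ ((fun x => x + vecReal z) '' Λ)) = 0


open Polynomial Filter
open scoped Matrix

attribute [local instance] Matrix.linftyOpNormedRing Matrix.linftyOpNormedAlgebra

lemma aux_charpoly_eval_eq {n : ℕ} (A : Matrix (Fin n) (Fin n) ℂ) (z : ℂ) :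
    A.charpoly.eval z = (Matrix.scalar (Fin n) z - A).det := by
  rw [Matrix.charpoly, eval_det, Matrix.matPolyEquiv_charmatrix]
  simp

lemma aux_mem_spectrum_root {n : ℕ} (A : Matrix (Fin n) (Fin n) ℂ) (z : ℂ)
    (hz : z ∈ spectrum ℂ A) : A.charpoly.eval z = 0 := by
  rw [spectrum.mem_iff] at hz
  rw [aux_charpoly_eval_eq]
  by_contra h
  exact hz ((Matrix.isUnit_iff_isUnit_det _).2 (Ne.isUnit h))

lemma aux_map_linfty_norm {n : ℕ} (A : Matrix (Fin n) (Fin n) ℝ) :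
    ‖A.map (algebraMap ℝ ℂ)‖ = ‖A‖ := by
  rw [Matrix.linfty_opNorm_def, Matrix.linfty_opNorm_def]
  congr 1
  apply Finset.sup_congr rfl
  intro i _
  apply Finset.sum_congr rfl
  intro j _
  simp [Matrix.map_apply]

lemma aux_shrink {n : ℕ} (M : Matrix (Fin n) (Fin n) ℤ)
    (hexp : IsExpandingMatrix (M.map (Int.cast : ℤ → ℝ))) (hdet : M.det ≠ 0) :
    ∀ C δ : ℝ, 0 < δ → ∃ k : ℕ, ∀ y : Fin n → ℝ, ‖y‖ ≤ C →
      ‖((M.map (Int.cast : ℤ → ℝ))⁻¹ ^ k) *ᵥ y‖ < δ := by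
  set Mre : Matrix (Fin n) (Fin n) ℝ := M.map (Int.cast : ℤ → ℝ) with hMre
  rcases Nat.eq_zero_or_pos n with hn | hn
  · subst hn
    intro C δ hδ
    refine ⟨0, fun y _ => ?_⟩
    have h0 : (Mre⁻¹ ^ 0) *ᵥ y = 0 := Subsingleton.elim _ _
    rw [h0, norm_zero]; exact hδ
  haveI : Nonempty (Fin n) := Fin.pos_iff_nonempty.mp hn
  haveI : CompleteSpace (Matrix (Fin n) (Fin n) ℂ) := FiniteDimensional.complete ℂ _
  set Mc : Matrix (Fin n) (Fin n) ℂ := Mre.map (algebraMap ℝ ℂ) with hMc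
  have hdetMre : Mre.det ≠ 0 := by
    have h : Mre = (Int.castRingHom ℝ).mapMatrix M := rfl
    rw [h, ← RingHom.map_det]
    exact (Int.cast_ne_zero (α := ℝ)).2 hdet
  have hdetMc : IsUnit Mc.det := by
    have h : Mc = (algebraMap ℝ ℂ).mapMatrix Mre := rfl
    rw [h, ← RingHom.map_det]
    exact Ne.isUnit (by simpa using hdetMre)
  obtain ⟨u, hu⟩ := (Matrix.isUnit_iff_isUnit_det Mc).2 hdetMc
  have hNc : (↑u⁻¹ : Matrix (Fin n) (Fin n) ℂ) = Mc⁻¹ := by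
    rw [Matrix.coe_units_inv, hu]
  have hspec : ∀ z ∈ spectrum ℂ (Mc⁻¹), ‖z‖₊ < 1 := by
    intro z hz
    rw [← hNc] at hz
    have hz0 : z ≠ 0 := by
      rintro rfl
      exact Units.zero_notMem_spectrum ℂ (u⁻¹) hz
    set zu : ℂˣ := Units.mk0 z hz0 with hzu
    have h1 : (↑zu⁻¹ : ℂ) ∈ spectrum ℂ (↑u : Matrix (Fin n) (Fin n) ℂ) := by
      rw [spectrum.inv_mem_iff]
      simpa [hzu] using hz
    have h2 : (z⁻¹ : ℂ) ∈ spectrum ℂ Mc := by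
      rw [← hu]
      simpa [hzu] using h1
    have h3 : (Mc.charpoly).eval z⁻¹ = 0 := aux_mem_spectrum_root _ _ h2
    have h4 : Mc.charpoly = Mre.charpoly.map (algebraMap ℝ ℂ) :=
      Matrix.charpoly_map Mre (algebraMap ℝ ℂ)
    have h5 : z⁻¹ ∈ (Mre.charpoly.map (algebraMap ℝ ℂ)).roots := by
      rw [Polynomial.mem_roots ((Mre.charpoly_monic.map (algebraMap ℝ ℂ)).ne_zero)]
      rw [Polynomial.IsRoot, ← h4]
      exact h3
    have h6 := hexp _ h5
    rw [norm_inv] at h6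
    have habs : ‖z‖ < 1 := by
      have h0 : 0 < ‖z‖ := by
        simpa [norm_pos_iff] using hz0
      by_contra h
      push_neg at h
      nlinarith [mul_inv_cancel₀ (ne_of_gt h0)]
    rw [← NNReal.coe_lt_coe]
    simpa [coe_nnnorm] using habs
  have hrad : spectralRadius ℂ (Mc⁻¹) < 1 := by
    have := spectrum.spectralRadius_lt_of_forall_lt (a := Mc⁻¹) (r := 1) hspec
    simpa using this
  have hG := spectrum.pow_nnnorm_pow_one_div_tendsto_nhds_spectralRadius (Mc⁻¹)
  have hev := hG.eventually_lt_const hrad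
  obtain ⟨m, hmlt, hm1⟩ := (hev.and (eventually_ge_atTop 1)).exists
  have hnorm : ‖(Mc⁻¹) ^ m‖₊ < 1 := by
    by_contra h
    push_neg at h
    have h1le : (1 : ENNReal) ≤ (‖(Mc⁻¹) ^ m‖₊ : ENNReal) ^ (1 / (m : ℝ)) :=
      ENNReal.one_le_rpow (by exact_mod_cast h) (by positivity)
    exact absurd h1le (not_le.2 hmlt)
  set r : ℝ := ‖(Mc⁻¹) ^ m‖ with hrdef
  have hr0 : 0 ≤ r := norm_nonneg _
  have hr1 : r < 1 := hnorm
  intro C δ hδ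
  have ht : Tendsto (fun q : ℕ => r ^ q * C) atTop (nhds 0) := by
    simpa using (tendsto_pow_atTop_nhds_zero_of_lt_one hr0 hr1).mul_const C
  obtain ⟨q, hq⟩ := (ht.eventually_lt_const hδ).exists
  refine ⟨m * q, fun y hy => ?_⟩
  have hinv : Mc⁻¹ = (Mre⁻¹).map (algebraMap ℝ ℂ) := by
    apply Matrix.inv_eq_left_inv
    rw [← Matrix.map_mul, Matrix.nonsing_inv_mul Mre (Ne.isUnit hdetMre), Matrix.map_one]
    · exact map_zero _
    · exact map_one _
  have hpowmap : ∀ k : ℕ, (Mc⁻¹) ^ k = ((Mre⁻¹) ^ k).map (algebraMap ℝ ℂ) := by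
    intro k
    rw [hinv]
    have := map_pow ((algebraMap ℝ ℂ).mapMatrix) (Mre⁻¹) k
    simpa [RingHom.mapMatrix_apply] using this.symm
  have hnormeq : ∀ k : ℕ, ‖(Mre⁻¹) ^ k‖ = ‖(Mc⁻¹) ^ k‖ := by
    intro k; rw [hpowmap, aux_map_linfty_norm]
  have hCnn : 0 ≤ C := le_trans (norm_nonneg y) hy
  calc ‖((Mre)⁻¹ ^ (m * q)) *ᵥ y‖ ≤ ‖(Mre)⁻¹ ^ (m * q)‖ * ‖y‖ :=
        Matrix.linfty_opNorm_mulVec _ _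
    _ = ‖(Mc⁻¹) ^ (m * q)‖ * ‖y‖ := by rw [hnormeq]
    _ ≤ r ^ q * C := by
        apply mul_le_mul _ hy (norm_nonneg y) (by positivity)
        rw [pow_mul]
        rcases Nat.eq_zero_or_pos q with hq0 | hq0
        · subst hq0; simp
        · exact norm_pow_le' _ hq0
    _ < δ := hq

lemma aux_mulVec_sum {n k : ℕ} (N : Matrix (Fin n) (Fin n) ℝ) (g : Fin k → (Fin n → ℝ)) :
    N *ᵥ (∑ i : Fin k, g i) = ∑ i : Fin k, N *ᵥ (g i) := by
  simpa only [Matrix.mulVecLin_apply] using map_sum N.mulVecLin g Finset.univ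

lemma aux_cons_sum {n k : ℕ} (N : Matrix (Fin n) (Fin n) ℝ) (f : Fin k → (Fin n → ℝ))
    (r y : Fin n → ℝ) :
    N *ᵥ ((∑ i : Fin k, (N ^ ((i : ℕ) + 1)) *ᵥ f i + (N ^ k) *ᵥ y) + r)
      = ∑ i : Fin (k + 1), (N ^ ((i : ℕ) + 1)) *ᵥ ((Fin.cons r f : Fin (k + 1) → (Fin n → ℝ)) i)
        + (N ^ (k + 1)) *ᵥ y := by
  rw [Fin.sum_univ_succ]
  simp only [Fin.cons_zero, Fin.cons_succ, Fin.val_succ, Fin.val_zero,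
    Matrix.mulVec_add, aux_mulVec_sum, Matrix.mulVec_mulVec]
  have hp : ∀ j : ℕ, N * N ^ j = N ^ (j + 1) := fun j => (pow_succ' N j).symm
  simp only [hp, pow_one, zero_add]
  abel

section IFS

variable {n : ℕ} {Mre : Matrix (Fin n) (Fin n) ℝ} {R' : Set (Fin n → ℝ)}
  {Λ : Set (Fin n → ℝ)}

lemma aux_gamma_add_mem (hfix : tauIFS Mre R' Λ = Λ) :
    ∀ (k : ℕ) (f : Fin k → (Fin n → ℝ)), (∀ i, f i ∈ R') → ∀ y ∈ Λ,
      (∑ i : Fin k, ((Mre⁻¹) ^ ((i : ℕ) + 1)) *ᵥ f i) + ((Mre⁻¹) ^ k) *ᵥ y ∈ Λ := by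
  intro k
  induction k with
  | zero => intro f hf y hy; simpa [Matrix.one_mulVec] using hy
  | succ k ih =>
    intro f hf y hy
    have hz := ih (fun i => f i.succ) (fun i => hf i.succ) y hy
    have hmem : Mre⁻¹ *ᵥ (((∑ i : Fin k, ((Mre⁻¹) ^ ((i : ℕ) + 1)) *ᵥ f i.succ) +
        ((Mre⁻¹) ^ k) *ᵥ y) + f 0) ∈ Λ := by
      rw [← hfix]
      exact Set.mem_biUnion (hf 0) ⟨_, hz, rfl⟩
    rw [aux_cons_sum] at hmem
    have hc : Fin.cons (f 0) (fun i => f i.succ) = f := Fin.cons_self_tail f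
    rwa [hc] at hmem

lemma aux_decompose (hfix : tauIFS Mre R' Λ = Λ) :
    ∀ (k : ℕ), ∀ w ∈ Λ, ∃ f : Fin k → (Fin n → ℝ), (∀ i, f i ∈ R') ∧ ∃ y ∈ Λ,
      w = (∑ i : Fin k, ((Mre⁻¹) ^ ((i : ℕ) + 1)) *ᵥ f i) + ((Mre⁻¹) ^ k) *ᵥ y := by
  intro k
  induction k with
  | zero =>
    intro w hw
    exact ⟨Fin.elim0, fun i => i.elim0, w, hw, by simp [Matrix.one_mulVec]⟩
  | succ k ih =>
    intro w hw
    rw [← hfix] at hw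
    rw [tauIFS, Set.mem_iUnion₂] at hw
    obtain ⟨r, hr, a, ha, hwa⟩ := hw
    obtain ⟨f, hf, y, hy, hay⟩ := ih a ha
    refine ⟨Fin.cons r f, ?_, y, hy, ?_⟩
    · intro i
      refine Fin.cases ?_ ?_ i
      · simpa using hr
      · intro j; simpa using hf j
    · rw [← hwa, hay]
      exact aux_cons_sum Mre⁻¹ f r y

lemma aux_zero_mem (hfix : tauIFS Mre R' Λ = Λ) (hne : Λ.Nonempty) (hc : IsCompact Λ)
    (h0R' : (0 : Fin n → ℝ) ∈ R')
    (hshrink : ∀ C δ : ℝ, 0 < δ → ∃ k : ℕ, ∀ y : Fin n → ℝ, ‖y‖ ≤ C →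
      ‖((Mre)⁻¹ ^ k) *ᵥ y‖ < δ) :
    (0 : Fin n → ℝ) ∈ Λ := by
  obtain ⟨w, hw⟩ := hne
  rw [← hc.isClosed.closure_eq, Metric.mem_closure_iff]
  intro ε hε
  obtain ⟨k, hk⟩ := hshrink ‖w‖ ε hε
  refine ⟨((Mre)⁻¹ ^ k) *ᵥ w, ?_, ?_⟩
  · have := aux_gamma_add_mem hfix k (fun _ => 0) (fun _ => h0R') w hw
    simpa [Matrix.mulVec_zero] using this
  · simpa [dist_zero_left] using hk w le_rfl

lemma aux_volume_image {n : ℕ} (g : Fin n → ℝ) (A : Matrix (Fin n) (Fin n) ℝ)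
    (s : Set (Fin n → ℝ)) :
    volume ((fun z => g + A *ᵥ z) '' s) = ENNReal.ofReal |A.det| * volume s := by
  have h1 : (fun z => g + A *ᵥ z) '' s = (fun u => g + u) '' (A.mulVecLin '' s) := by
    rw [← Set.image_comp]; rfl
  have h2 : (fun u => g + u) '' (A.mulVecLin '' s) = (fun u => -g + u) ⁻¹' (A.mulVecLin '' s) := by
    ext u
    simp only [Set.mem_image, Set.mem_preimage]
    constructor
    · rintro ⟨v, hv, rfl⟩; simpa using hv
    · intro hv; exact ⟨-g + u, hv, by abel⟩
  rw [h1, h2, measure_preimage_add]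
  have h3 := MeasureTheory.Measure.addHaar_image_linearMap (μ := volume) A.mulVecLin s
  rw [h3]
  congr 2
  rw [← Matrix.toLin'_apply', LinearMap.det_toLin']

lemma aux_density (hfix : tauIFS Mre R' Λ = Λ) (hc : IsCompact Λ)
    (hvol : 0 < volume Λ) (hdetMre : Mre.det ≠ 0)
    (hshrink : ∀ C δ : ℝ, 0 < δ → ∃ k : ℕ, ∀ y : Fin n → ℝ, ‖y‖ ≤ C →
      ‖((Mre)⁻¹ ^ k) *ᵥ y‖ < δ) :
    ∀ w ∈ Λ, ∀ δ : ℝ, 0 < δ → 0 < volume (ball w δ ∩ Λ) := by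
  obtain ⟨C, hC⟩ := hc.isBounded.subset_closedBall 0
  have hCn : ∀ y ∈ Λ, ‖y‖ ≤ C := fun y hy => mem_closedBall_zero_iff.mp (hC hy)
  intro w hw δ hδ
  obtain ⟨k, hk⟩ := hshrink (C + C) δ hδ
  obtain ⟨f, hf, y, hy, hwe⟩ := aux_decompose hfix k w hw
  set g := ∑ i : Fin k, ((Mre)⁻¹ ^ ((i : ℕ) + 1)) *ᵥ f i with hg
  have hsubΛ : (fun z => g + ((Mre)⁻¹ ^ k) *ᵥ z) '' Λ ⊆ Λ := by
    rintro _ ⟨z, hz, rfl⟩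
    exact aux_gamma_add_mem hfix k f hf z hz
  have hsubB : (fun z => g + ((Mre)⁻¹ ^ k) *ᵥ z) '' Λ ⊆ ball w δ := by
    rintro _ ⟨z, hz, rfl⟩
    rw [mem_ball, dist_eq_norm, hwe]
    have he : g + ((Mre)⁻¹ ^ k) *ᵥ z - (g + ((Mre)⁻¹ ^ k) *ᵥ y)
        = ((Mre)⁻¹ ^ k) *ᵥ (z - y) := by
      rw [Matrix.mulVec_sub]; abel
    rw [he]
    exact hk _ (le_trans (norm_sub_le _ _) (add_le_add (hCn z hz) (hCn y hy)))
  have hdetk : ((Mre)⁻¹ ^ k).det ≠ 0 := by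
    rw [Matrix.det_pow]
    apply pow_ne_zero
    rw [Matrix.det_nonsing_inv, Ring.inverse_eq_inv]
    exact inv_ne_zero hdetMre
  refine lt_of_lt_of_le ?_ (measure_mono (Set.subset_inter hsubB hsubΛ))
  rw [aux_volume_image]
  exact ENNReal.mul_pos (by simpa [ENNReal.ofReal_eq_zero, not_le] using abs_pos.mpr hdetk)
    (ne_of_gt hvol)

lemma aux_frontier (hc : IsCompact Λ)
    (hdens : ∀ w ∈ Λ, ∀ δ : ℝ, 0 < δ → 0 < volume (ball w δ ∩ Λ))
    (hnull : ∀ z : Fin n → ℤ, z ≠ 0 → volume (Λ ∩ ((fun x => x + vecReal z) '' Λ)) = 0)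
    {p : Fin n → ℝ} {i : Fin n → ℤ} (hp : p ∈ Λ) (hq : p + vecReal i ∈ Λ) (hi : i ≠ 0) :
    p ∈ frontier Λ := by
  rw [hc.isClosed.frontier_eq]
  refine ⟨hp, fun hint => ?_⟩
  obtain ⟨ε, hε, hball⟩ := Metric.mem_nhds_iff.mp (mem_interior_iff_mem_nhds.mp hint)
  have hpos := hdens _ hq ε hε
  have hsub : ball (p + vecReal i) ε ∩ Λ ⊆ Λ ∩ ((fun x => x + vecReal i) '' Λ) := by
    rintro u ⟨hu1, hu2⟩
    refine ⟨hu2, u - vecReal i, hball ?_, by simp⟩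
    rw [mem_ball] at hu1 ⊢
    rw [dist_eq_norm] at hu1 ⊢
    have he : u - vecReal i - p = u - (p + vecReal i) := by abel
    rw [he]
    exact hu1
  have hle : volume (ball (p + vecReal i) ε ∩ Λ) ≤
      volume (Λ ∩ ((fun x => x + vecReal i) '' Λ)) := measure_mono hsub
  rw [hnull i hi] at hle
  exact absurd (le_antisymm hle (zero_le)) (ne_of_gt hpos)

end IFS

/-- `Δ_k ⊆ N_{3 ε_k}(∂Λ)` where `ε_k = diam (M^{-k} Λ)`. -/
theorem stmt10 (n : ℕ) (M : Matrix (Fin n) (Fin n) ℤ) (R : Finset (Fin n → ℤ))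
    (hMR : IsStandardPair M R) (hdet : M.det ≠ 0)
    (Λ : Set (Fin n → ℝ)) (hne : Λ.Nonempty) (hc : IsCompact Λ)
    (hfix : tauIFS (M.map (Int.cast : ℤ → ℝ)) (vecReal '' ↑R) Λ = Λ)
    (htile : IsTileByZn Λ) :
    ∀ k : ℕ,
      DeltaSet (M.map (Int.cast : ℤ → ℝ)) (vecReal '' ↑R) Λ k ⊆
        Metric.cthickening
          (3 * Metric.diam ((fun x => ((M.map (Int.cast : ℤ → ℝ))⁻¹ ^ k).mulVec x) '' Λ))
          (frontier Λ) := by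
  classical
  obtain ⟨hexp, h0R, -⟩ := hMR
  set Mre : Matrix (Fin n) (Fin n) ℝ := M.map (Int.cast : ℤ → ℝ) with hMreDef
  have hshrink := aux_shrink M hexp hdet
  have hdetMre : Mre.det ≠ 0 := by
    have h : Mre = (Int.castRingHom ℝ).mapMatrix M := rfl
    rw [h, ← RingHom.map_det]
    exact (Int.cast_ne_zero (α := ℝ)).2 hdet
  have h0R' : (0 : Fin n → ℝ) ∈ vecReal '' (↑R : Set (Fin n → ℤ)) :=
    ⟨0, h0R, by funext i; simp [vecReal]⟩
  have hzero : (0 : Fin n → ℝ) ∈ Λ := aux_zero_mem hfix hne hc h0R' hshrink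
  have hdens : ∀ w ∈ Λ, ∀ δ : ℝ, 0 < δ → 0 < volume (ball w δ ∩ Λ) :=
    aux_density hfix hc htile.2.1 hdetMre hshrink
  intro k x hx
  obtain ⟨hxG, i, hiS, hi0, j, hjS, hj0, hyG⟩ := hx
  obtain ⟨a2, ha2, b2, hb2, hab⟩ := Set.mem_sub.mp hjS
  obtain ⟨f, hf, hxe⟩ := hxG
  have hp : x + ((Mre)⁻¹ ^ k) *ᵥ a2 ∈ Λ := by
    have := aux_gamma_add_mem hfix k f hf a2 ha2
    rwa [← hxe] at this
  obtain ⟨g, hg, hye⟩ := hyG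
  have hqmem : (x + vecReal i + ((Mre)⁻¹ ^ k) *ᵥ vecReal j) + ((Mre)⁻¹ ^ k) *ᵥ b2 ∈ Λ := by
    have := aux_gamma_add_mem hfix k g hg b2 hb2
    rwa [← hye] at this
  have hqe : (x + vecReal i + ((Mre)⁻¹ ^ k) *ᵥ vecReal j) + ((Mre)⁻¹ ^ k) *ᵥ b2
      = (x + ((Mre)⁻¹ ^ k) *ᵥ a2) + vecReal i := by
    rw [← hab, Matrix.mulVec_sub]
    abel
  rw [hqe] at hqmem
  have hpf : (x + ((Mre)⁻¹ ^ k) *ᵥ a2) ∈ frontier Λ :=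
    aux_frontier hc hdens htile.2.2.2 hp hqmem hi0
  have hcont : Continuous fun v : Fin n → ℝ => ((Mre)⁻¹ ^ k) *ᵥ v := by
    have := (((Mre)⁻¹ ^ k).mulVecLin).continuous_of_finiteDimensional
    exact this
  have himg : Bornology.IsBounded ((fun v : Fin n → ℝ => ((Mre)⁻¹ ^ k) *ᵥ v) '' Λ) :=
    (hc.image hcont).isBounded
  have hmem1 : ((Mre)⁻¹ ^ k) *ᵥ a2 ∈ (fun v : Fin n → ℝ => ((Mre)⁻¹ ^ k) *ᵥ v) '' Λ :=
    ⟨a2, ha2, rfl⟩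
  have hmem0 : (0 : Fin n → ℝ) ∈ (fun v : Fin n → ℝ => ((Mre)⁻¹ ^ k) *ᵥ v) '' Λ :=
    ⟨0, hzero, by simp [Matrix.mulVec_zero]⟩
  have hdle : dist x (x + ((Mre)⁻¹ ^ k) *ᵥ a2)
      ≤ diam ((fun v : Fin n → ℝ => ((Mre)⁻¹ ^ k) *ᵥ v) '' Λ) := by
    have h1 := dist_le_diam_of_mem himg hmem1 hmem0
    have h2 : dist x (x + ((Mre)⁻¹ ^ k) *ᵥ a2) = dist (((Mre)⁻¹ ^ k) *ᵥ a2) 0 := by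
      rw [dist_eq_norm, dist_eq_norm]
      have he : x - (x + ((Mre)⁻¹ ^ k) *ᵥ a2) = -(((Mre)⁻¹ ^ k) *ᵥ a2 - 0) := by abel
      rw [he, norm_neg]
    rw [h2]
    exact h1
  apply Metric.mem_cthickening_of_dist_le x (x + ((Mre)⁻¹ ^ k) *ᵥ a2) _ _ hpf
  refine hdle.trans ?_
  have hd0 : 0 ≤ diam ((fun v : Fin n → ℝ => ((Mre)⁻¹ ^ k) *ᵥ v) '' Λ) := diam_nonneg
  linarith
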